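/- Let K be a field, N ≥ 3, and R = K[x_1,x_2,x_3,y_0,y_1,...,y_N] a polynomial ring in N+4 variables. Let I = (x_1^2, x_1x_2, x_1x_3, x_1y_0 + x_2^N, x_1y_1 + x_2^{N-1}x_3, ..., x_1y_N + x_3^N). Then the radical of I equals (x_1,x_2,x_3), so I has height three. -/

import Mathlib

open MvPolynomial

/-- The variables `x₁, x₂, x₃` of `K[x₁,x₂,x₃,y₀,…,y_N]`. -/
noncomputable def xv {K : Type*} [Field K] {N : ℕ} (i : Fin 3) :
    MvPolynomial (Fin 3 ⊕ Fin (N + 1)) K :=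
  X (Sum.inl i)

/-- The variables `y₀, …, y_N` of `K[x₁,x₂,x₃,y₀,…,y_N]`. -/
noncomputable def yv {K : Type*} [Field K] {N : ℕ} (j : Fin (N + 1)) :
    MvPolynomial (Fin 3 ⊕ Fin (N + 1)) K :=
  X (Sum.inr j)

/-- The ideal `I = (x₁², x₁x₂, x₁x₃, x₁y₀ + x₂^N, …, x₁y_N + x₃^N)`. -/
noncomputable def exIdeal (K : Type*) [Field K] (N : ℕ) :
    Ideal (MvPolynomial (Fin 3 ⊕ Fin (N + 1)) K) :=
  Ideal.span ({xv 0 ^ 2, xv 0 * xv 1, xv 0 * xv 2} ∪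
    Set.range (fun j : Fin (N + 1) =>
      xv 0 * yv j + xv 1 ^ (N - (j : ℕ)) * xv 2 ^ (j : ℕ)))

/-- The height of an ideal: the infimum of the heights of the primes containing it. -/
noncomputable def idealHeight {R : Type*} [CommRing R] (I : Ideal R) : ℕ∞ :=
  ⨅ (P : PrimeSpectrum R) (_ : I ≤ P.asIdeal), Order.height P


section SpanX
variable {K : Type*} [Field K] {σ : Type*}

open Classical in
lemma aeval_ite_monomial (s : Set σ) (e : σ →₀ ℕ) (c : K) :
    aeval (fun i => if i ∈ s then 0 else X i) (monomial e c) =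
      if ∀ i ∈ e.support, i ∉ s then monomial e c else (0 : MvPolynomial σ K) := by
  rw [aeval_monomial]
  split_ifs with h
  · have he : (e.prod fun i k => (if i ∈ s then (0 : MvPolynomial σ K) else X i) ^ k) =
        e.prod fun i k => X i ^ k := Finsupp.prod_congr fun i hi => by rw [if_neg (h i hi)]
    rw [he, algebraMap_eq, ← monomial_eq]
  · push_neg at h
    obtain ⟨i, hi, his⟩ := h
    rw [Finsupp.prod]
    rw [Finset.prod_eq_zero hi]
    · ring
    · rw [if_pos his, zero_pow]
      simpa using hi

open Classical in
lemma ker_aeval_ite (s : Set σ) :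
    RingHom.ker ((aeval (fun i => if i ∈ s then 0 else X i) :
        MvPolynomial σ K →ₐ[K] MvPolynomial σ K) : MvPolynomial σ K →+* MvPolynomial σ K) =
      Ideal.span (X '' s) := by
  apply le_antisymm
  · intro f hf
    simp only [RingHom.mem_ker, RingHom.coe_coe] at hf
    rw [mem_ideal_span_X_image]
    intro d hd
    by_contra hcon
    push_neg at hcon
    have hco : coeff d (aeval (fun i => if i ∈ s then 0 else X i) f) = coeff d f := by
      conv_lhs => rw [f.as_sum, map_sum]
      rw [coeff_sum]
      rw [Finset.sum_eq_single_of_mem d hd]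
      · rw [aeval_ite_monomial, if_pos]
        · simp
        · intro i hi his
          exact (Finsupp.mem_support_iff.mp hi) (hcon i his)
      · intro e he hne
        rw [aeval_ite_monomial]
        split_ifs
        · rw [coeff_monomial, if_neg hne]
        · simp
    rw [hf] at hco
    exact (mem_support_iff.mp hd) hco.symm
  · rw [Ideal.span_le]
    rintro _ ⟨i, hi, rfl⟩
    simp [RingHom.mem_ker, if_pos hi]

lemma isPrime_span_X_image (s : Set σ) :
    (Ideal.span (X '' s) : Ideal (MvPolynomial σ K)).IsPrime := by
  classical
  rw [← ker_aeval_ite]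
  exact RingHom.ker_isPrime _

lemma X_mem_span_X_image_iff [Nontrivial K] (s : Set σ) (j : σ) :
    (X j : MvPolynomial σ K) ∈ Ideal.span (X '' s) ↔ j ∈ s := by
  constructor
  · intro h
    rw [mem_ideal_span_X_image] at h
    obtain ⟨i, his, hi⟩ := h (Finsupp.single j 1) (by simp [support_X])
    rwa [show i = j by by_contra hne; simp [Finsupp.single_apply, Ne.symm hne] at hi] at his
  · intro h
    exact Ideal.subset_span ⟨j, h, rfl⟩

end SpanX


section Drop
variable {K : Type*} [Field K] {R : Type*} [CommRing R] [Algebra K R]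

lemma aeval_cons_eq_eval₂ {m : ℕ} (t : R) (z : Fin m → R) (P : MvPolynomial (Fin (m + 1)) K) :
    aeval (Fin.cons t z) P =
      Polynomial.eval₂ ((aeval z : MvPolynomial (Fin m) K →ₐ[K] R) : _ →+* R) t
        (finSuccEquiv K m P) := by
  induction P using MvPolynomial.induction_on with
  | C a => simp [finSuccEquiv_apply, Polynomial.eval₂_C, MvPolynomial.algebraMap_eq]
  | add p q hp hq => simp [map_add, Polynomial.eval₂_add, hp, hq]
  | mul_X p i hp =>
    rw [map_mul, map_mul, Polynomial.eval₂_mul, hp]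
    congr 1
    induction i using Fin.cases with
    | zero => simp [finSuccEquiv_X_zero]
    | succ j => simp [finSuccEquiv_X_succ]

lemma algebraicIndependent_cons_of_lt {m : ℕ} {p q : Ideal R} (hp : p.IsPrime) (hq : q.IsPrime)
    (hpq : p ≤ q) {t : R} (htq : t ∈ q) (htp : t ∉ p) {z : Fin m → R}
    (hz : AlgebraicIndependent K ((Ideal.Quotient.mkₐ K q) ∘ z)) :
    AlgebraicIndependent K ((Ideal.Quotient.mkₐ K p) ∘ (Fin.cons t z)) := by
  rw [algebraicIndependent_iff]
  intro P hP
  by_contra hP0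
  have hP2 : (Ideal.Quotient.mkₐ K p) (aeval (Fin.cons t z) P) = 0 := by
    rw [MvPolynomial.comp_aeval_apply]; exact hP
  have hmem : aeval (Fin.cons t z) P ∈ p := by
    rwa [← Ideal.Quotient.eq_zero_iff_mem, ← Ideal.Quotient.mkₐ_eq_mk K]
  have hP'0 : finSuccEquiv K m P ≠ 0 := fun h => hP0 (by
    have := congrArg (finSuccEquiv K m).symm h
    simpa using this)
  set k := (finSuccEquiv K m P).natTrailingDegree with hk
  obtain ⟨Q, hQ⟩ : (Polynomial.X : Polynomial (MvPolynomial (Fin m) K)) ^ k ∣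
      finSuccEquiv K m P :=
    Polynomial.X_pow_dvd_iff.mpr fun d hd =>
      Polynomial.coeff_eq_zero_of_lt_natTrailingDegree hd
  have hQ0 : Q.coeff 0 ≠ 0 := by
    have h1 : (finSuccEquiv K m P).coeff k = Q.coeff 0 := by
      rw [hQ]
      simpa using Polynomial.coeff_X_pow_mul Q k 0
    rw [← h1, hk]
    exact Polynomial.coeff_natTrailingDegree_ne_zero.mpr hP'0
  set u := Polynomial.eval₂ ((aeval z : MvPolynomial (Fin m) K →ₐ[K] R) : _ →+* R) t Q with hu
  have hfact : aeval (Fin.cons t z) P = t ^ k * u := by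
    rw [aeval_cons_eq_eval₂, hQ, Polynomial.eval₂_mul, Polynomial.eval₂_X_pow]
  have hup : u ∈ p := by
    rw [hfact] at hmem
    rcases hp.mem_or_mem hmem with h | h
    · exact absurd (hp.mem_of_pow_mem _ h) htp
    · exact h
  have huq : u ∈ q := hpq hup
  have hzero : Ideal.Quotient.mk q u = 0 := Ideal.Quotient.eq_zero_iff_mem.mpr huq
  rw [hu, Polynomial.hom_eval₂, Ideal.Quotient.eq_zero_iff_mem.mpr htq,
    Polynomial.eval₂_at_zero, RingHom.comp_apply] at hzero
  have : aeval (⇑(Ideal.Quotient.mkₐ K q) ∘ z) (Q.coeff 0) = 0 := by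
    have h2 : (Ideal.Quotient.mkₐ K q) (aeval z (Q.coeff 0)) = 0 := by simpa using hzero
    rw [MvPolynomial.comp_aeval_apply] at h2
    exact h2
  exact hQ0 (algebraicIndependent_iff.mp hz _ this)

lemma chain_extend : ∀ (n : ℕ) (c : LTSeries (PrimeSpectrum R)), c.length = n →
    ∀ (m : ℕ) (z : Fin m → R),
    AlgebraicIndependent K ((Ideal.Quotient.mkₐ K c.last.asIdeal) ∘ z) →
    ∃ w : Fin (m + n) → R,
      AlgebraicIndependent K ((Ideal.Quotient.mkₐ K c.head.asIdeal) ∘ w) := by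
  intro n
  induction n with
  | zero =>
    intro c hc m z hz
    have : c.head = c.last := by
      unfold RelSeries.head RelSeries.last
      congr 1
      ext
      simp [hc]
    rw [this]
    exact ⟨z, hz⟩
  | succ n ih =>
    intro c hc m z hz
    have hne : c.length ≠ 0 := by omega
    have hlt : c.eraseLast.last < c.last := c.eraseLast_last_rel_last hne
    have hltI : c.eraseLast.last.asIdeal < c.last.asIdeal := hlt
    obtain ⟨t, htq, htp⟩ := SetLike.exists_of_lt hltI
    have hcons := algebraicIndependent_cons_of_lt (K := K) c.eraseLast.last.isPrime
      c.last.isPrime hltI.le htq htp hz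
    obtain ⟨w, hw⟩ := ih c.eraseLast (by simp [hc]) (m + 1) (Fin.cons t z) (by
      rwa [RelSeries.last_eraseLast] at hcons ⊢)
    refine ⟨w ∘ Fin.cast (by omega), ?_⟩
    have := hw.comp (Fin.cast (by omega : m + (n + 1) = m + 1 + n)) (fun a b => by
      intro h; exact Fin.cast_injective _ h)
    rwa [RelSeries.head_eraseLast] at this

end Drop


section Count
variable {K : Type*} [Field K]

/-- Key counting fact: there is no algebraically independent family of `n+1`
polynomials in `n` variables. -/
lemma not_algebraicIndependent_card_succ' (σ : Type*) [Fintype σ] (n : ℕ)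
    (hn : Fintype.card σ = n)
    (w : Fin (n + 1) → MvPolynomial σ K)
    (h : AlgebraicIndependent K w) : False := by
  classical
  set d := (Finset.univ.sup fun i => (w i).totalDegree) + 1 with hd
  set c := (n + 1) * d + 1 with hc
  set E := c ^ n + 1 with hE
  -- the exponent set
  set T : Finset (σ →₀ ℕ) := (Finset.univ : Finset (σ → Fin (c * E))).image
    (fun f => Finsupp.equivFunOnFinite.symm fun i => (f i : ℕ)) with hT
  set Sf : Finset (MvPolynomial σ K) := T.image (fun e => monomial e (1 : K)) with hSf
  set W : Submodule K (MvPolynomial σ K) := Submodule.span K (Sf : Set (MvPolynomial σ K))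
    with hW
  -- the family of monomials in the `w i`
  set μ : (Fin (n + 1) → Fin E) → ((Fin (n + 1)) →₀ ℕ) :=
    fun v => Finsupp.equivFunOnFinite.symm (fun i => (v i : ℕ)) with hμ
  set g : (Fin (n + 1) → Fin E) → MvPolynomial σ K :=
    fun v => aeval w (monomial (μ v) (1 : K)) with hg
  -- linear independence of the family g
  have hμinj : Function.Injective μ := by
    intro a b hab
    funext i
    have := congrArg (fun e => e i) hab
    simpa [μ, Fin.val_injective.eq_iff] using this
  have hgind : LinearIndependent K g := by
    have hmono : LinearIndependent K (fun v : Fin (n + 1) → Fin E =>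
        (monomial (μ v) (1 : K) : MvPolynomial (Fin (n + 1)) K)) := by
      have hb := (MvPolynomial.basisMonomials (Fin (n + 1)) K).linearIndependent
      have := hb.comp μ hμinj
      simpa [MvPolynomial.coe_basisMonomials, Function.comp_def] using this
    have hinj : Function.Injective (aeval w : MvPolynomial (Fin (n + 1)) K →ₐ[K] _) :=
      algebraicIndependent_iff_injective_aeval.mp h
    exact hmono.map' (aeval w).toLinearMap (LinearMap.ker_eq_bot.mpr hinj)
  -- each g v has small total degree
  have hdeg : ∀ v, (g v).totalDegree < c * E := by
    intro v
    have h1 : g v = ∏ i : Fin (n + 1), w i ^ ((v i : ℕ)) := by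
      show (aeval w) (monomial (μ v) 1) = _
      rw [aeval_monomial, map_one, one_mul]
      rw [Finsupp.prod_fintype]
      · simp [μ]
      · intro i; exact pow_zero _
    calc (g v).totalDegree ≤ ∑ i : Fin (n + 1), (w i ^ (v i : ℕ)).totalDegree := by
          rw [h1]; exact totalDegree_finset_prod _ _
      _ ≤ ∑ _i : Fin (n + 1), E * d := by
          apply Finset.sum_le_sum
          intro i _
          calc (w i ^ (v i : ℕ)).totalDegree ≤ (v i : ℕ) * (w i).totalDegree :=
                totalDegree_pow _ _
            _ ≤ E * d := by
                apply Nat.mul_le_mul (le_of_lt (v i).isLt)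
                have : (w i).totalDegree ≤ Finset.univ.sup fun i => (w i).totalDegree :=
                  Finset.le_sup (f := fun i => (w i).totalDegree) (Finset.mem_univ i)
                omega
      _ = (n + 1) * (E * d) := by simp [Finset.sum_const, mul_comm]
      _ < c * E := by
          rw [hc]
          have hE1 : 1 ≤ E := by rw [hE]; omega
          calc (n + 1) * (E * d) = ((n + 1) * d) * E := by ring
            _ < ((n + 1) * d) * E + E := by omega
            _ = ((n + 1) * d + 1) * E := by ring
  -- membership in W
  have hmem : ∀ v, g v ∈ W := by
    intro v
    rw [(g v).as_sum]
    apply Submodule.sum_mem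
    intro e he
    have hesum : e.sum (fun _ k => k) ≤ (g v).totalDegree := le_totalDegree he
    have heT : e ∈ T := by
      rw [hT, Finset.mem_image]
      have hecoord : ∀ i, e i < c * E := by
        intro i
        have : e i ≤ e.sum fun _ k => k := by
          by_cases hi : i ∈ e.support
          · exact Finset.single_le_sum (f := fun i => e i) (fun _ _ => Nat.zero_le _) hi
          · simp [Finsupp.notMem_support_iff.mp hi]
        have := hdeg v
        omega
      refine ⟨fun i => ⟨e i, hecoord i⟩, Finset.mem_univ _, ?_⟩
      ext i
      simp
    have : monomial e (coeff e (g v)) = (coeff e (g v)) • monomial e (1 : K) := by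
      rw [smul_monomial, smul_eq_mul, mul_one]
    rw [this]
    exact Submodule.smul_mem _ _ (Submodule.subset_span (by
      rw [hSf]; exact Finset.mem_coe.mpr (Finset.mem_image_of_mem _ heT)))
  -- transfer to a linearly independent family in W
  set g' : (Fin (n + 1) → Fin E) → W := fun v => ⟨g v, hmem v⟩ with hg'
  have hg'ind : LinearIndependent K g' := by
    apply LinearIndependent.of_comp (W.subtype)
    simpa [Function.comp_def, hg'] using hgind
  haveI : Module.Finite K W := by
    rw [hW]
    exact Module.Finite.span_of_finite K (Sf.finite_toSet)
  have hcard := hg'ind.fintype_card_le_finrank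
  have hrank : Module.finrank K W ≤ T.card := by
    calc Module.finrank K W ≤ Sf.card := finrank_span_finset_le_card (R := K) Sf
      _ ≤ T.card := Finset.card_image_le
  have hTcard : T.card ≤ (c * E) ^ n := by
    calc T.card ≤ (Finset.univ : Finset (σ → Fin (c * E))).card := Finset.card_image_le
      _ = (c * E) ^ n := by simp [Finset.card_univ, hn]
  have hgcard : Fintype.card (Fin (n + 1) → Fin E) = E ^ (n + 1) := by
    simp
  rw [hgcard] at hcard
  have hfinal : E ^ (n + 1) ≤ (c * E) ^ n := le_trans hcard (le_trans hrank hTcard)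
  -- contradiction: E = c^n + 1 > c^n
  have hc1 : 1 ≤ c := by rw [hc]; omega
  have hE1 : 1 ≤ E := by rw [hE]; omega
  have hcE : c ^ n < E := by rw [hE]; omega
  have hEn : 0 < E ^ n := pow_pos (by omega) n
  have : (c * E) ^ n < E ^ (n + 1) := by
    rw [mul_pow, pow_succ, mul_comm (E ^ n) E]
    exact Nat.mul_lt_mul_of_lt_of_le hcE le_rfl hEn
  omega

lemma algebraicIndependent_card_le (σ : Type*) [Fintype σ] {m : ℕ}
    (w : Fin m → MvPolynomial σ K) (h : AlgebraicIndependent K w) :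
    m ≤ Fintype.card σ := by
  by_contra hcon
  push_neg at hcon
  exact not_algebraicIndependent_card_succ' σ (Fintype.card σ) rfl
    (w ∘ Fin.castLE hcon) (h.comp _ (Fin.castLE_injective _))

end Count

theorem stmt7 {K : Type*} [Field K] (N : ℕ) (hN : 3 ≤ N) :
    (exIdeal K N).radical =
        Ideal.span {(xv 0 : MvPolynomial (Fin 3 ⊕ Fin (N + 1)) K), xv 1, xv 2} ∧
      idealHeight (exIdeal K N) = 3 := by
  set σ := (Fin 3 ⊕ Fin (N + 1)) with hσ
  set R := MvPolynomial σ K with hR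
  set s3 : Set σ := {Sum.inl 0, Sum.inl 1, Sum.inl 2} with hs3
  set m : Ideal R := Ideal.span {xv 0, xv 1, xv 2} with hm
  have hmeq : m = Ideal.span (X '' s3) := by
    rw [hm, hs3]
    congr 1
    rw [Set.image_insert_eq, Set.image_insert_eq, Set.image_singleton]
    rfl
  have hprime : m.IsPrime := by rw [hmeq]; exact isPrime_span_X_image s3
  -- basic membership
  have hx0 : (xv 0 : R) ∈ m := Ideal.subset_span (by simp)
  have hx1 : (xv 1 : R) ∈ m := Ideal.subset_span (by simp)
  have hx2 : (xv 2 : R) ∈ m := Ideal.subset_span (by simp)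
  -- I ≤ m
  have hIle : exIdeal K N ≤ m := by
    rw [exIdeal, Ideal.span_le]
    rintro f (hf | ⟨j, rfl⟩)
    · rcases hf with rfl | rfl | rfl
      · rw [sq]; exact Ideal.mul_mem_right _ _ hx0
      · exact Ideal.mul_mem_right _ _ hx0
      · exact Ideal.mul_mem_right _ _ hx0
    · apply Ideal.add_mem
      · exact Ideal.mul_mem_right _ _ hx0
      · rcases Nat.eq_zero_or_pos (j : ℕ) with hj | hj
        · apply Ideal.mul_mem_right
          rw [hj, Nat.sub_zero]
          exact Ideal.pow_mem_of_mem _ hx1 N (by omega)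
        · apply Ideal.mul_mem_left
          exact Ideal.pow_mem_of_mem _ hx2 _ hj
  -- generators of exIdeal
  have hgen0 : (xv 0 : R) ^ 2 ∈ exIdeal K N :=
    Ideal.subset_span (Set.mem_union_left _ (by simp))
  have hgeny : ∀ j : Fin (N + 1),
      (xv 0 * yv j + xv 1 ^ (N - (j : ℕ)) * xv 2 ^ (j : ℕ) : R) ∈ exIdeal K N := fun j =>
    Ideal.subset_span (Set.mem_union_right _ ⟨j, rfl⟩)
  -- radical = m
  have hx0rad : (xv 0 : R) ∈ (exIdeal K N).radical :=
    Ideal.mem_radical_of_pow_mem (Ideal.le_radical hgen0)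
  have hx1rad : (xv 1 : R) ∈ (exIdeal K N).radical := by
    have h0 := hgeny 0
    have hval : ((0 : Fin (N + 1)) : ℕ) = 0 := rfl
    rw [hval, Nat.sub_zero, pow_zero, mul_one] at h0
    have hsub : (xv 1 : R) ^ N ∈ (exIdeal K N).radical := by
      have := Ideal.sub_mem _ (Ideal.le_radical h0)
        (Ideal.mul_mem_right (yv 0) _ hx0rad)
      simpa using this
    exact Ideal.mem_radical_of_pow_mem hsub
  have hx2rad : (xv 2 : R) ∈ (exIdeal K N).radical := by
    have h0 := hgeny (Fin.last N)
    have hval : ((Fin.last N : Fin (N + 1)) : ℕ) = N := rfl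
    rw [hval, Nat.sub_self, pow_zero, one_mul] at h0
    have hsub : (xv 2 : R) ^ N ∈ (exIdeal K N).radical := by
      have := Ideal.sub_mem _ (Ideal.le_radical h0)
        (Ideal.mul_mem_right (yv (Fin.last N)) _ hx0rad)
      simpa using this
    exact Ideal.mem_radical_of_pow_mem hsub
  have hrad : (exIdeal K N).radical = m := by
    apply le_antisymm
    · have h1 := Ideal.radical_mono hIle
      rwa [hprime.radical] at h1
    · rw [hm, Ideal.span_le]
      rintro f (rfl | rfl | rfl)
      · exact hx0rad
      · exact hx1rad
      · exact hx2rad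
  refine ⟨hrad, ?_⟩
  -- now the height
  set M : PrimeSpectrum R := ⟨m, hprime⟩ with hM
  have hheight_eq : idealHeight (exIdeal K N) = Order.height M := by
    apply le_antisymm
    · exact iInf₂_le M hIle
    · apply le_iInf₂
      intro P hP
      apply Order.height_mono
      show m ≤ P.asIdeal
      calc m = (exIdeal K N).radical := hrad.symm
        _ ≤ P.asIdeal.radical := Ideal.radical_mono hP
        _ = P.asIdeal := P.isPrime.radical
  -- lower bound
  have hge : (3 : ℕ∞) ≤ Order.height M := by
    set s1 : Set σ := {Sum.inl 0} with hs1
    set s2 : Set σ := {Sum.inl 0, Sum.inl 1} with hs2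
    set P0 : PrimeSpectrum R := ⟨⊥, Ideal.bot_prime⟩ with hP0
    set P1 : PrimeSpectrum R := ⟨Ideal.span (X '' s1), isPrime_span_X_image s1⟩ with hP1
    set P2 : PrimeSpectrum R := ⟨Ideal.span (X '' s2), isPrime_span_X_image s2⟩ with hP2
    have h01 : P0 < P1 := by
      show (⊥ : Ideal R) < Ideal.span (X '' s1)
      rw [SetLike.lt_iff_le_and_exists]
      refine ⟨bot_le, X (Sum.inl 0), ?_, ?_⟩
      · rw [X_mem_span_X_image_iff]; simp [hs1]
      · rw [Ideal.mem_bot]; exact X_ne_zero _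
    have h12 : P1 < P2 := by
      show Ideal.span (X '' s1) < Ideal.span (X '' s2)
      rw [SetLike.lt_iff_le_and_exists]
      refine ⟨Ideal.span_mono (Set.image_mono (by simp [hs1, hs2])), X (Sum.inl 1), ?_, ?_⟩
      · rw [X_mem_span_X_image_iff]; simp [hs2]
      · rw [X_mem_span_X_image_iff]
        simp only [hs1, Set.mem_singleton_iff]
        intro h
        exact absurd (Sum.inl_injective h) (by decide)
    have h23 : P2 < M := by
      show Ideal.span (X '' s2) < m
      rw [hmeq, SetLike.lt_iff_le_and_exists]
      refine ⟨Ideal.span_mono (Set.image_mono ?_), X (Sum.inl 2), ?_, ?_⟩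
      · intro x hx
        simp only [hs2, hs3, Set.mem_insert_iff, Set.mem_singleton_iff] at hx ⊢
        tauto
      · rw [X_mem_span_X_image_iff]; simp [hs3]
      · rw [X_mem_span_X_image_iff]
        simp only [hs2, Set.mem_insert_iff, Set.mem_singleton_iff]
        rintro (h | h) <;> simp_all <;> exact absurd (Sum.inl.injEq .. ▸ h) (by decide)
    set ch : LTSeries (PrimeSpectrum R) :=
      (((RelSeries.singleton _ P0).snoc P1 (by simpa using h01)).snoc P2
        (by simpa using h12)).snoc M (by simpa using h23) with hch
    have hlen : ch.length = 3 := by simp [hch]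
    have hlast : ch.last = M := by simp [hch]
    have := Order.length_le_height_last (p := ch)
    rw [hlen, hlast] at this
    exact this
  -- upper bound
  have hle : Order.height M ≤ (3 : ℕ∞) := by
    apply Order.height_le
    intro c hclast
    -- y's are algebraically independent mod m
    have hy : AlgebraicIndependent K ((Ideal.Quotient.mkₐ K M.asIdeal) ∘ (yv : Fin (N + 1) → R)) := by
      rw [algebraicIndependent_iff]
      intro P hP
      by_contra hP0
      have hP2 : (Ideal.Quotient.mkₐ K M.asIdeal) (aeval (yv : Fin (N + 1) → R) P) = 0 := by
        rw [MvPolynomial.comp_aeval_apply]; exact hP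
      have hmem : aeval (yv : Fin (N + 1) → R) P ∈ m := by
        rwa [Ideal.Quotient.mkₐ_eq_mk, Ideal.Quotient.eq_zero_iff_mem] at hP2
      have hren : aeval (yv : Fin (N + 1) → R) P = rename Sum.inr P := by
        clear hmem hP2 hP hP0
        induction P using MvPolynomial.induction_on with
        | C a => rw [aeval_C, rename_C]; rfl
        | add p q hp hq => rw [map_add, map_add, hp, hq]
        | mul_X p n hp => rw [map_mul, map_mul, hp, aeval_X, rename_X]; rfl
      rw [hren, hmeq, mem_ideal_span_X_image] at hmem
      obtain ⟨d0, hd0⟩ := MvPolynomial.support_nonempty.mpr hP0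
      have hd : (Finsupp.mapDomain (Sum.inr : Fin (N + 1) → σ) d0) ∈
          (rename (Sum.inr : Fin (N + 1) → σ) P).support := by
        rw [mem_support_iff, coeff_rename_mapDomain _ Sum.inr_injective]
        exact mem_support_iff.mp hd0
      obtain ⟨i, his, hi⟩ := hmem _ hd
      apply hi
      apply Finsupp.mapDomain_notin_range
      rcases his with rfl | rfl | rfl <;> simp
    have hylast : AlgebraicIndependent K
        ((Ideal.Quotient.mkₐ K c.last.asIdeal) ∘ (yv : Fin (N + 1) → R)) := by
      rw [hclast]; exact hy
    obtain ⟨w, hw⟩ := chain_extend c.length c rfl (N + 1) (yv : Fin (N + 1) → R) hylast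
    have hwind : AlgebraicIndependent K w :=
      AlgebraicIndependent.of_comp (Ideal.Quotient.mkₐ K c.head.asIdeal) hw
    have hcard := algebraicIndependent_card_le σ w hwind
    have hσcard : Fintype.card σ = N + 4 := by simp [hσ]; omega
    rw [hσcard] at hcard
    have : c.length ≤ 3 := by omega
    exact_mod_cast this
  rw [hheight_eq]
  exact le_antisymm hle hge
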